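/- If X ⊆ X₋^ℓ supports a spherical 2-design and M is an invertible linear map with Mᵀ u = u satisfying M⁻¹ X ⊆ X₋^ℓ, then |det M| ≥ 1, with equality if and only if M is orthogonal. Consequently the identity (range X₋^ℓ itself) is the unique minimum-volume consistent body: the sphere X₋^ℓ is the minimizer of vol(M X₋^ℓ) over all such M. -/

import Mathlib

open Matrix Finset

/-- `g(w) = |w|₂ − √2 û·w`. -/
noncomputable def gFun {ℓ : ℕ} (u : Fin ℓ → ℝ) (w : Fin ℓ → ℝ) : ℝ :=
  Real.sqrt (w ⬝ᵥ w) - Real.sqrt 2 * (((Real.sqrt (u ⬝ᵥ u))⁻¹ • u) ⬝ᵥ w)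

/-- The spherical state space `X₋^ℓ`. -/
noncomputable def sphericalStateSpace {ℓ : ℕ} (u : Fin ℓ → ℝ) : Set (Fin ℓ → ℝ) :=
  {v | gFun u v ≤ 0 ∧ u ⬝ᵥ v = 1}

theorem mul_vecMulVec' {ℓ : ℕ} (A : Matrix (Fin ℓ) (Fin ℓ) ℝ) (v w : Fin ℓ → ℝ) :
    A * vecMulVec v w = vecMulVec (A.mulVec v) w := by
  ext i j
  simp [Matrix.mul_apply, vecMulVec_apply, mulVec, dotProduct, Finset.sum_mul, mul_assoc]

theorem vecMulVec_mul' {ℓ : ℕ} (A : Matrix (Fin ℓ) (Fin ℓ) ℝ) (v w : Fin ℓ → ℝ) :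
    vecMulVec v w * Aᵀ = vecMulVec v (A.mulVec w) := by
  ext i j
  simp [Matrix.mul_apply, vecMulVec_apply, mulVec, dotProduct, Finset.mul_sum, mul_comm, mul_left_comm]

theorem trace_vecMulVec' {ℓ : ℕ} (v w : Fin ℓ → ℝ) : trace (vecMulVec v w) = v ⬝ᵥ w := by
  simp [Matrix.trace, vecMulVec_apply, dotProduct, Matrix.diag]

theorem trace_eq_sum_eig {n : ℕ} (A : Matrix (Fin n) (Fin n) ℝ) (hA : A.IsHermitian) :
    A.trace = ∑ i, hA.eigenvalues i := by
  conv_lhs => rw [hA.spectral_theorem, Unitary.conjStarAlgAut_apply]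
  rw [Matrix.trace_mul_comm, ← mul_assoc]
  have h1 : (star (hA.eigenvectorUnitary : Matrix (Fin n) (Fin n) ℝ)) * hA.eigenvectorUnitary = 1 :=
    (Matrix.mem_unitaryGroup_iff').mp hA.eigenvectorUnitary.2
  rw [h1, one_mul, Matrix.trace_diagonal]
  simp

theorem amgm_aux (n : ℕ) (f : Fin n → ℝ) (hf : ∀ i, 0 < f i) (hs : ∑ i, f i ≤ n) :
    ∏ i, f i ≤ 1 ∧ (∏ i, f i = 1 → ∀ i, f i = 1) := by
  have hlog : ∑ i, Real.log (f i) ≤ ∑ i, (f i - 1) := by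
    apply Finset.sum_le_sum
    intro i _
    exact Real.log_le_sub_one_of_pos (hf i)
  have hsum1 : ∑ i : Fin n, (f i - 1) ≤ 0 := by
    rw [Finset.sum_sub_distrib]
    simp only [Finset.sum_const, Finset.card_univ, Fintype.card_fin, nsmul_eq_mul, mul_one]
    linarith
  have hprodpos : 0 < ∏ i, f i := Finset.prod_pos (fun i _ => hf i)
  have hlogprod : Real.log (∏ i, f i) = ∑ i, Real.log (f i) := by
    rw [Real.log_prod]
    intro i _; exact (hf i).ne'
  constructor
  · by_contra h
    push_neg at h
    have := Real.log_pos h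
    rw [hlogprod] at this
    linarith
  · intro hp i
    have h0 : ∑ j, Real.log (f j) = 0 := by rw [← hlogprod, hp, Real.log_one]
    have key : ∑ j : Fin n, (f j - 1 - Real.log (f j)) = 0 → ∀ j ∈ Finset.univ, f j - 1 - Real.log (f j) = 0 := by
      intro hz
      apply (Finset.sum_eq_zero_iff_of_nonneg ?_).mp hz
      intro j _
      have := Real.log_le_sub_one_of_pos (hf j)
      linarith
    have hz : ∑ j : Fin n, (f j - 1 - Real.log (f j)) ≤ 0 := by
      rw [Finset.sum_sub_distrib, h0]
      linarith
    have hz' : 0 ≤ ∑ j : Fin n, (f j - 1 - Real.log (f j)) := by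
      apply Finset.sum_nonneg
      intro j _
      have := Real.log_le_sub_one_of_pos (hf j)
      linarith
    have heach := key (le_antisymm hz hz') i (Finset.mem_univ i)
    by_contra hne
    have := Real.log_lt_sub_one_of_pos (hf i) hne
    linarith

theorem eig_one_eq_one {n : ℕ} (A : Matrix (Fin n) (Fin n) ℝ) (hA : A.IsHermitian)
    (h : ∀ i, hA.eigenvalues i = 1) : A = 1 := by
  rw [hA.spectral_theorem, Unitary.conjStarAlgAut_apply]
  have hd : Matrix.diagonal (RCLike.ofReal ∘ hA.eigenvalues) = (1 : Matrix (Fin n) (Fin n) ℝ) := by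
    have : (RCLike.ofReal ∘ hA.eigenvalues : Fin n → ℝ) = fun _ => 1 :=
      funext fun i => by simp [h i]
    rw [this, Matrix.diagonal_one]
  rw [hd, mul_one]
  exact (Matrix.mem_unitaryGroup_iff).mp hA.eigenvectorUnitary.2

set_option maxHeartbeats 1000000 in
/-- If `X ⊆ X₋^ℓ` supports a spherical 2-design and the invertible map `M` with
`Mᵀu = u` satisfies `M⁻¹ X ⊆ X₋^ℓ`, then `|det M| ≥ 1`, with equality iff `M`
is orthogonal; hence the sphere itself is the minimum-volume consistent body. -/
theorem two_design_det_ge_one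
    (ℓ : ℕ) (hℓ : 2 ≤ ℓ) (u : Fin ℓ → ℝ) (hu : u ≠ 0)
    (X : Set (Fin ℓ → ℝ)) (hX : X ⊆ sphericalStateSpace u)
    (hdesign : ∃ (K : ℕ) (p : Fin K → ℝ) (v : Fin K → Fin ℓ → ℝ),
      (∀ k, 0 < p k) ∧ ∑ k, p k = 1 ∧ (∀ k, v k ∈ X) ∧
      ∑ k, p k • vecMulVec (v k) (v k)
        = (1 / (u ⬝ᵥ u)) •
          ((1 / ((ℓ : ℝ) - 1)) • (1 : Matrix (Fin ℓ) (Fin ℓ) ℝ)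
            + (((ℓ : ℝ) - 2) / ((ℓ : ℝ) - 1)) •
              vecMulVec ((Real.sqrt (u ⬝ᵥ u))⁻¹ • u) ((Real.sqrt (u ⬝ᵥ u))⁻¹ • u)))
    (M : Matrix (Fin ℓ) (Fin ℓ) ℝ) (hM : IsUnit M.det)
    (hMu : Mᵀ.mulVec u = u)
    (hincl : M⁻¹.mulVec '' X ⊆ sphericalStateSpace u) :
    1 ≤ |M.det| ∧ (|M.det| = 1 ↔ Mᵀ * M = 1) := by
  obtain ⟨K, p, v, hp, hp1, hvX, hdes⟩ := hdesign
  set A := M⁻¹ with hA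
  have hn : 0 < u ⬝ᵥ u := by
    have h1 : u ⬝ᵥ u = ∑ i, u i * u i := rfl
    obtain ⟨i, hi⟩ := Function.ne_iff.mp hu
    rw [h1]
    exact Finset.sum_pos' (fun j _ => mul_self_nonneg _) ⟨i, Finset.mem_univ i, mul_self_pos.mpr hi⟩
  set n := u ⬝ᵥ u with hnn
  set uh : Fin ℓ → ℝ := (Real.sqrt n)⁻¹ • u with huh
  have hsq : Real.sqrt n * Real.sqrt n = n := Real.mul_self_sqrt hn.le
  have hsqpos : 0 < Real.sqrt n := Real.sqrt_pos.mpr hn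
  have huhuh : uh ⬝ᵥ uh = 1 := by
    rw [huh, smul_dotProduct, dotProduct_smul, ← hnn, smul_eq_mul, smul_eq_mul,
      ← hsq]
    field_simp
    rw [Real.sqrt_sq hsqpos.le]
  -- ℓ - 1 > 0 etc.
  have hl1 : (0:ℝ) < (ℓ:ℝ) - 1 := by
    have : (2:ℝ) ≤ (ℓ:ℝ) := by exact_mod_cast hℓ
    linarith
  have hl2 : (0:ℝ) ≤ (ℓ:ℝ) - 2 := by
    have : (2:ℝ) ≤ (ℓ:ℝ) := by exact_mod_cast hℓ
    linarith
  -- A is invertible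
  have hAdet : IsUnit A.det := by
    exact M.isUnit_nonsing_inv_det hM
  -- Aᵀ fixes u
  have hAu : Aᵀ.mulVec u = u := by
    rw [hA, Matrix.transpose_nonsing_inv]
    have hMT : IsUnit Mᵀ.det := by rwa [Matrix.det_transpose]
    calc (Mᵀ)⁻¹.mulVec u = (Mᵀ)⁻¹.mulVec (Mᵀ.mulVec u) := by rw [hMu]
    _ = ((Mᵀ)⁻¹ * Mᵀ).mulVec u := by rw [Matrix.mulVec_mulVec]
    _ = u := by rw [Matrix.nonsing_inv_mul _ hMT, Matrix.one_mulVec]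
  have hAuh : Aᵀ.mulVec uh = uh := by
    rw [huh, Matrix.mulVec_smul, hAu]
  -- membership bound : for w in state space, w ⬝ᵥ w ≤ 2 / n
  have hbound : ∀ w ∈ sphericalStateSpace u, w ⬝ᵥ w ≤ 2 / n := by
    intro w hw
    obtain ⟨hg, hdot⟩ := hw
    have hww : (0:ℝ) ≤ w ⬝ᵥ w := by
      have : w ⬝ᵥ w = ∑ i, w i * w i := rfl
      rw [this]; exact Finset.sum_nonneg fun i _ => mul_self_nonneg _
    have huw : uh ⬝ᵥ w = (Real.sqrt n)⁻¹ := by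
      rw [huh, smul_dotProduct, hdot]; simp
    rw [gFun] at hg
    rw [huw] at hg
    have h1 : Real.sqrt (w ⬝ᵥ w) ≤ Real.sqrt 2 * (Real.sqrt n)⁻¹ := by linarith
    have h3 := mul_self_le_mul_self (Real.sqrt_nonneg (w ⬝ᵥ w)) h1
    rw [Real.mul_self_sqrt hww] at h3
    have h4 : (Real.sqrt 2 * (Real.sqrt n)⁻¹) * (Real.sqrt 2 * (Real.sqrt n)⁻¹) = 2 / n := by
      have h5 : Real.sqrt 2 * Real.sqrt 2 = 2 := Real.mul_self_sqrt (by norm_num)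
      field_simp
      rw [Real.sq_sqrt (by norm_num : (0:ℝ) ≤ 2), Real.sq_sqrt hn.le]; ring
    rw [h4] at h3
    exact h3
  have hwmem : ∀ k, A.mulVec (v k) ∈ sphericalStateSpace u := fun k =>
    hincl ⟨v k, hvX k, rfl⟩
  set H := A * Aᵀ with hH
  -- key trace identity
  have htr : ∑ k, p k * ((A.mulVec (v k)) ⬝ᵥ (A.mulVec (v k)))
      = (1 / n) * ((1 / ((ℓ:ℝ) - 1)) * trace H
        + (((ℓ:ℝ) - 2) / ((ℓ:ℝ) - 1)) * ((A.mulVec uh) ⬝ᵥ (A.mulVec uh))) := by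
    have hc := congrArg (fun S => trace (A * S * Aᵀ)) hdes
    simp only [Matrix.mul_sum, Matrix.sum_mul, Matrix.mul_smul, Matrix.smul_mul,
      Matrix.trace_sum, Matrix.trace_smul, Matrix.mul_add, Matrix.add_mul, Matrix.trace_add,
      Matrix.mul_one, mul_vecMulVec', vecMulVec_mul', trace_vecMulVec', smul_eq_mul] at hc
    rw [hH]
    convert hc using 1
  set t := trace H with htdef
  set s := (A.mulVec uh) ⬝ᵥ (A.mulVec uh) with hsdef
  -- Cauchy-Schwarz lower bound on s
  have hdotA : uh ⬝ᵥ (A.mulVec uh) = 1 := by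
    rw [Matrix.dotProduct_mulVec, ← Matrix.mulVec_transpose, hAuh, huhuh]
  have hs1 : 1 ≤ s := by
    have hcs := Finset.sum_mul_sq_le_sq_mul_sq Finset.univ uh (A.mulVec uh)
    have e1 : ∑ i, uh i * (A.mulVec uh) i = uh ⬝ᵥ (A.mulVec uh) := rfl
    have e2 : ∑ i, uh i ^ 2 = uh ⬝ᵥ uh := by simp [dotProduct, sq]
    have e3 : ∑ i, (A.mulVec uh) i ^ 2 = s := by simp [hsdef, dotProduct, sq]
    rw [e1, e2, e3, hdotA, huhuh, one_pow, one_mul] at hcs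
    exact hcs
  -- sum of bounds
  have hsumle : ∑ k, p k * ((A.mulVec (v k)) ⬝ᵥ (A.mulVec (v k))) ≤ 2 / n := by
    calc ∑ k, p k * ((A.mulVec (v k)) ⬝ᵥ (A.mulVec (v k)))
        ≤ ∑ k, p k * (2 / n) :=
          Finset.sum_le_sum fun k _ =>
            mul_le_mul_of_nonneg_left (hbound _ (hwmem k)) (hp k).le
      _ = 2 / n := by rw [← Finset.sum_mul, hp1, one_mul]
  have h6 : (1 / n) * ((1 / ((ℓ:ℝ) - 1)) * t + (((ℓ:ℝ) - 2) / ((ℓ:ℝ) - 1)) * s) ≤ 2 / n := by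
    rw [← htr]; exact hsumle
  have hE : (1 / ((ℓ:ℝ) - 1)) * t + (((ℓ:ℝ) - 2) / ((ℓ:ℝ) - 1)) * s ≤ 2 := by
    have h7 := mul_le_mul_of_nonneg_left h6 hn.le
    have e1 : n * ((1 / n) * ((1 / ((ℓ:ℝ) - 1)) * t + (((ℓ:ℝ) - 2) / ((ℓ:ℝ) - 1)) * s))
        = (1 / ((ℓ:ℝ) - 1)) * t + (((ℓ:ℝ) - 2) / ((ℓ:ℝ) - 1)) * s := by
      field_simp
    have e2 : n * (2 / n) = 2 := by field_simp
    linarith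
  have ht : t ≤ (ℓ:ℝ) := by
    have h8 : t + ((ℓ:ℝ) - 2) * s ≤ 2 * ((ℓ:ℝ) - 1) := by
      have h9 := mul_le_mul_of_nonneg_left hE hl1.le
      have e1 : ((ℓ:ℝ) - 1) * ((1 / ((ℓ:ℝ) - 1)) * t + (((ℓ:ℝ) - 2) / ((ℓ:ℝ) - 1)) * s)
          = t + ((ℓ:ℝ) - 2) * s := by
        field_simp
      linarith
    nlinarith
  -- Hermitian / eigenvalues
  have hct : Aᴴ = Aᵀ := by ext i j; simp [Matrix.conjTranspose_apply]
  have hHh : H.IsHermitian := by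
    have := Matrix.isHermitian_mul_conjTranspose_self A
    rwa [hct] at this
  have hPSD : H.PosSemidef := by
    have := Matrix.posSemidef_self_mul_conjTranspose A
    rwa [hct] at this
  have hsumeig : ∑ i, hHh.eigenvalues i = t := (trace_eq_sum_eig H hHh).symm
  have hdetH : H.det = A.det ^ 2 := by
    rw [hH, Matrix.det_mul, Matrix.det_transpose, sq]
  have hprodeig : ∏ i, hHh.eigenvalues i = A.det ^ 2 := by
    rw [← hdetH]
    have := hHh.det_eq_prod_eigenvalues
    simpa using this.symm
  have hdetA0 : A.det ≠ 0 := hAdet.ne_zero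
  have heigpos : ∀ i, 0 < hHh.eigenvalues i := by
    intro i
    rcases lt_or_eq_of_le (hPSD.eigenvalues_nonneg i) with h | h
    · exact h
    · exfalso
      have : ∏ j, hHh.eigenvalues j = 0 :=
        Finset.prod_eq_zero (Finset.mem_univ i) h.symm
      rw [hprodeig] at this
      exact pow_ne_zero 2 hdetA0 this
  have hamgm := amgm_aux ℓ hHh.eigenvalues heigpos (by rw [hsumeig]; exact ht)
  have hdA : A.det = M.det⁻¹ := by
    rw [hA, Matrix.det_nonsing_inv, Ring.inverse_eq_inv']
  have hMdet0 : M.det ≠ 0 := hM.ne_zero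
  have hd2pos : (0:ℝ) < M.det ^ 2 := by positivity
  -- main inequality
  have hprodle : A.det ^ 2 ≤ 1 := by rw [← hprodeig]; exact hamgm.1
  have hone_le : 1 ≤ M.det ^ 2 := by
    rw [hdA, inv_pow] at hprodle
    nlinarith [mul_inv_cancel₀ hd2pos.ne']
  have habs : 1 ≤ |M.det| := by nlinarith [sq_abs M.det, abs_nonneg M.det]
  refine ⟨habs, ?_, ?_⟩
  · intro heq
    have hd21 : M.det ^ 2 = 1 := by
      rw [← sq_abs, heq]; norm_num
    have hprod1 : ∏ i, hHh.eigenvalues i = 1 := by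
      rw [hprodeig, hdA, inv_pow, hd21]; norm_num
    have hall := hamgm.2 hprod1
    have hH1 : H = 1 := eig_one_eq_one H hHh hall
    have hMT : IsUnit Mᵀ.det := by rwa [Matrix.det_transpose]
    have hinv1 : (Mᵀ * M)⁻¹ = 1 := by
      rw [Matrix.mul_inv_rev]
      rw [hH, hA, Matrix.transpose_nonsing_inv] at hH1
      exact hH1
    have hunit : IsUnit (Mᵀ * M).det := by
      rw [Matrix.det_mul, Matrix.det_transpose]
      exact hM.mul hM
    calc Mᵀ * M = ((Mᵀ * M)⁻¹)⁻¹ := (Matrix.nonsing_inv_nonsing_inv _ hunit).symm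
      _ = 1 := by rw [hinv1, inv_one]
  · intro horth
    have hdd : M.det * M.det = 1 := by
      have := congrArg Matrix.det horth
      simpa [Matrix.det_mul, Matrix.det_transpose] using this
    rcases mul_self_eq_one_iff.mp hdd with h | h <;> rw [h] <;> norm_num
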